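/- For all a, b > 0 and 0 ≤ t ≤ 1, one has (a^t b^{1-t} + a^{1-t} b^t) + 4t(1-t)(√a - √b)^2 ≤ a + b. -/

import Mathlib

open Real

lemma sinh_mul_le (s : ℝ) (hs0 : 0 ≤ s) (hs1 : s ≤ 1) (x : ℝ) (hx : 0 ≤ x) :
    Real.sinh (s * x) ≤ s * Real.sinh x := by
  have hd : ∀ y : ℝ, HasDerivAt (fun y => s * Real.sinh y - Real.sinh (s * y))
      (s * Real.cosh y - Real.cosh (s * y) * s) y := by
    intro y
    have h1 : HasDerivAt (fun y : ℝ => s * y) (s * 1) y := (hasDerivAt_id y).const_mul s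
    exact ((Real.hasDerivAt_sinh y).const_mul s).sub
      (by rw [mul_one] at h1; exact (Real.hasDerivAt_sinh (s * y)).comp y h1)
  have hmono : MonotoneOn (fun y => s * Real.sinh y - Real.sinh (s * y)) (Set.Ici 0) := by
    apply monotoneOn_of_deriv_nonneg (convex_Ici 0)
      (Continuous.continuousOn (by continuity))
      (fun y hy => (hd y).differentiableAt.differentiableWithinAt)
    intro y hy
    rw [(hd y).deriv]
    have hc : Real.cosh (s * y) ≤ Real.cosh y := by
      rw [Real.cosh_le_cosh]
      rw [interior_Ici, Set.mem_Ioi] at hy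
      rw [abs_mul, abs_of_nonneg hs0, abs_of_nonneg hy.le]
      nlinarith
    nlinarith
  have h0 : (0:ℝ) ∈ Set.Ici (0:ℝ) := Set.mem_Ici.mpr le_rfl
  have := hmono h0 (Set.mem_Ici.mpr hx) hx
  simp only [mul_zero, Real.sinh_zero, sub_zero] at this
  linarith

lemma cosh_key (s x : ℝ) (hs : |s| ≤ 1) :
    Real.cosh (s * x) ≤ s ^ 2 * Real.cosh x + (1 - s ^ 2) := by
  have h1 : Real.cosh (s * x) = Real.cosh (|s| * |x|) := by
    rw [← Real.cosh_abs, abs_mul]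
  have h2 : Real.cosh x = Real.cosh |x| := (Real.cosh_abs x).symm
  have hs2 : s ^ 2 = |s| ^ 2 := (sq_abs s).symm
  rw [h1, h2, hs2]
  set u := |s| with hu
  set y := |x| with hy
  have hu0 : 0 ≤ u := abs_nonneg s
  have hy0 : 0 ≤ y := abs_nonneg x
  -- cosh z = 1 + 2 sinh(z/2)^2
  have hid : ∀ z : ℝ, Real.cosh z = 1 + 2 * Real.sinh (z / 2) ^ 2 := by
    intro z
    have := Real.cosh_two_mul (z / 2)
    have h2 := Real.cosh_sq' (z / 2)
    rw [show 2 * (z / 2) = z by ring] at this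
    linarith
  rw [hid (u * y), hid y]
  have hkey : Real.sinh (u * y / 2) ≤ u * Real.sinh (y / 2) := by
    have := sinh_mul_le u hu0 hs (y / 2) (by linarith)
    rw [show u * (y / 2) = u * y / 2 by ring] at this
    exact this
  have hnn : 0 ≤ Real.sinh (u * y / 2) := Real.sinh_nonneg_iff.mpr (by positivity)
  nlinarith [Real.sinh_nonneg_iff.mpr (show (0:ℝ) ≤ y/2 by linarith)]

theorem quadratic_heinz_refinement (a b t : ℝ) (ha : 0 < a) (hb : 0 < b)
    (ht0 : 0 ≤ t) (ht1 : t ≤ 1) :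
    (a ^ t * b ^ (1 - t) + a ^ (1 - t) * b ^ t)
      + 4 * t * (1 - t) * (Real.sqrt a - Real.sqrt b) ^ 2 ≤ a + b := by
  set α := Real.log a with hα
  set β := Real.log b with hβ
  set m := (α + β) / 2 with hm
  set δ := (α - β) / 2 with hδ
  have hs : |2 * t - 1| ≤ 1 := abs_le.mpr ⟨by linarith, by linarith⟩
  have key := cosh_key (2 * t - 1) δ hs
  -- rpow to exp
  have hab1 : a ^ t * b ^ (1 - t) = Real.exp (m + (2 * t - 1) * δ) := by
    rw [Real.rpow_def_of_pos ha, Real.rpow_def_of_pos hb, ← Real.exp_add]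
    congr 1
    rw [hm, hδ]; ring
  have hab2 : a ^ (1 - t) * b ^ t = Real.exp (m - (2 * t - 1) * δ) := by
    rw [Real.rpow_def_of_pos ha, Real.rpow_def_of_pos hb, ← Real.exp_add]
    congr 1
    rw [hm, hδ]; ring
  have ha2 : Real.exp (α / 2) ^ 2 = a := by
    rw [sq, ← Real.exp_add, show α / 2 + α / 2 = α by ring, hα, Real.exp_log ha]
  have hb2 : Real.exp (β / 2) ^ 2 = b := by
    rw [sq, ← Real.exp_add, show β / 2 + β / 2 = β by ring, hβ, Real.exp_log hb]
  have hsa : Real.sqrt a = Real.exp (α / 2) := by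
    rw [← ha2, Real.sqrt_sq (Real.exp_nonneg _)]
  have hsb : Real.sqrt b = Real.exp (β / 2) := by
    rw [← hb2, Real.sqrt_sq (Real.exp_nonneg _)]
  have hcross : Real.exp (α / 2) * Real.exp (β / 2) = Real.exp m := by
    rw [← Real.exp_add]; congr 1; rw [hm]; ring
  have eq1 : Real.exp (m + (2 * t - 1) * δ) + Real.exp (m - (2 * t - 1) * δ)
      = Real.exp m * (2 * Real.cosh ((2 * t - 1) * δ)) := by
    rw [Real.cosh_eq, show m - (2 * t - 1) * δ = m + -((2 * t - 1) * δ) by ring,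
      Real.exp_add, Real.exp_add]
    ring
  have eq2 : a + b = Real.exp m * (2 * Real.cosh δ) := by
    have haa : a = Real.exp (m + δ) := by rw [hm, hδ, show (α+β)/2 + (α-β)/2 = α by ring, hα, Real.exp_log ha]
    have hbb : b = Real.exp (m - δ) := by rw [hm, hδ, show (α+β)/2 - (α-β)/2 = β by ring, hβ, Real.exp_log hb]
    rw [haa, hbb, Real.cosh_eq, show m - δ = m + -δ by ring, Real.exp_add, Real.exp_add]
    ring
  rw [hab1, hab2, hsa, hsb]
  have hE : (0:ℝ) < Real.exp m := Real.exp_pos m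
  nlinarith [mul_le_mul_of_nonneg_left key hE.le, sq_nonneg (Real.exp (α/2) - Real.exp (β/2)),
    mul_nonneg (mul_nonneg ht0 (by linarith : (0:ℝ) ≤ 1 - t)) (sq_nonneg (Real.exp (α/2) - Real.exp (β/2)))]
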